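/- Let v ∈ Y be nonzero, P_v the orthogonal projection of Y onto the span of v, and I the identity on Y. Then the operator Q = L L* + (ε/‖v‖)(I − P_v) is coercive on Y: there exists c > 0 such that ⟨Q w, w⟩ ≥ c‖w‖² for all w ∈ Y. -/

import Mathlib

open RealInnerProductSpace ContinuousLinearMap

lemma sq_lower_aux {E : Type*} [NormedAddCommGroup E] (a b : E) :
    (1/2) * ‖a‖^2 - ‖b‖^2 ≤ ‖a + b‖^2 := by
  have h : ‖a‖ ≤ ‖a + b‖ + ‖b‖ := by
    calc ‖a‖ = ‖a + b + (-b)‖ := by simp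
    _ ≤ ‖a + b‖ + ‖-b‖ := norm_add_le _ _
    _ = ‖a + b‖ + ‖b‖ := by simp
  nlinarith [norm_nonneg a, norm_nonneg b, norm_nonneg (a + b),
    mul_self_le_mul_self (norm_nonneg a) h, sq_nonneg (‖a + b‖ - ‖b‖)]

set_option maxHeartbeats 1000000 in
/-- For nonzero v, the operator L L* + (ε/‖v‖)(I − P_v) is coercive on Y, where
P_v is the orthogonal projection onto the span of v. -/
theorem EulerLagrange_linearization_coercive
    {X Y : Type*} [NormedAddCommGroup X] [InnerProductSpace ℝ X] [CompleteSpace X]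
    [NormedAddCommGroup Y] [InnerProductSpace ℝ Y] [CompleteSpace Y]
    (L : X →L[ℝ] Y) (hinj : Function.Injective (adjoint L))
    (ε : ℝ) (hε : 0 < ε) (v : Y) (hv : v ≠ 0) :
    ∃ c > 0, ∀ w : Y,
      c * ‖w‖^2 ≤
        ⟪L (adjoint L w) + (ε / ‖v‖) • (w - (Submodule.orthogonalProjectionOnto (ℝ ∙ v) w : Y)), w⟫ := by
  set A := adjoint L with hA
  have hvnorm : 0 < ‖v‖ := norm_pos_iff.mpr hv
  set δ := ε / ‖v‖ with hδdef
  have hδ : 0 < δ := div_pos hε hvnorm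
  have hAv : A v ≠ 0 := by
    intro h
    exact hv (hinj (by simp [h]))
  have hAvn : 0 < ‖A v‖ := norm_pos_iff.mpr hAv
  have hM : 0 < ‖A‖ := by
    have h := A.le_opNorm v
    nlinarith [norm_nonneg A]
  set m := ‖A v‖ / ‖v‖ with hm
  have hm0 : 0 < m := div_pos hAvn hvnorm
  set t := min 1 (δ / (2 * ‖A‖ ^ 2)) with ht
  have ht0 : 0 < t := lt_min one_pos (div_pos hδ (by positivity))
  have ht1 : t ≤ 1 := min_le_left _ _
  have ht2 : t * (2 * ‖A‖ ^ 2) ≤ δ := by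
    have hle := min_le_right 1 (δ / (2 * ‖A‖ ^ 2))
    calc t * (2 * ‖A‖ ^ 2) ≤ (δ / (2 * ‖A‖ ^ 2)) * (2 * ‖A‖ ^ 2) :=
          mul_le_mul_of_nonneg_right hle (by positivity)
      _ = δ := by field_simp
  set c := min (t * m ^ 2 / 2) (δ / 2) with hc
  have hc0 : 0 < c := lt_min (by positivity) (by positivity)
  have hc1 : c ≤ t * m ^ 2 / 2 := min_le_left _ _
  have hc2 : c ≤ δ / 2 := min_le_right _ _
  refine ⟨c, hc0, fun w => ?_⟩
  set K := (ℝ ∙ v) with hK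
  set p : Y := (Submodule.orthogonalProjectionOnto K w : Y) with hp
  set u : Y := w - p with hu
  have hpmem : p ∈ K := (Submodule.orthogonalProjectionOnto K w).2
  have humem : u ∈ Kᗮ := Submodule.sub_starProjection_mem_orthogonal (K := K) w
  have hpu : ⟪p, u⟫ = 0 := humem p hpmem
  have hup : ⟪u, p⟫ = 0 := by rw [real_inner_comm]; exact hpu
  have hw : w = p + u := by simp [hu]
  -- compute the inner product
  have h1 : ⟪L (A w) + δ • u, w⟫ = ‖A w‖ ^ 2 + δ * ‖u‖ ^ 2 := by
    rw [inner_add_left, real_inner_smul_left]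
    have hLA : ⟪L (A w), w⟫ = ‖A w‖ ^ 2 := by
      rw [← adjoint_inner_right L (A w) w, ← hA, real_inner_self_eq_norm_sq]
    have huw : ⟪u, w⟫ = ‖u‖ ^ 2 := by
      rw [hw, inner_add_right, hup, real_inner_self_eq_norm_sq]; ring
    rw [hLA, huw]
  -- norm splitting
  have h5 : ‖w‖ ^ 2 = ‖p‖ ^ 2 + ‖u‖ ^ 2 := by
    rw [hw, norm_add_sq_real, hpu]; ring
  -- bound on A p
  have h3 : ‖A p‖ = m * ‖p‖ := by
    rcases Submodule.mem_span_singleton.mp hpmem with ⟨r, hr⟩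
    rw [← hr, map_smul, norm_smul, norm_smul, hm]
    field_simp
  -- bound on A u
  have h4 : ‖A u‖ ≤ ‖A‖ * ‖u‖ := A.le_opNorm u
  have h4' : ‖A u‖ ^ 2 ≤ ‖A‖ ^ 2 * ‖u‖ ^ 2 := by
    simpa [mul_pow] using pow_le_pow_left₀ (norm_nonneg (A u)) h4 2
  have h2 : (1/2) * ‖A p‖ ^ 2 - ‖A u‖ ^ 2 ≤ ‖A w‖ ^ 2 := by
    have hAw : A w = A p + A u := by rw [hw, map_add]
    rw [hAw]
    exact sq_lower_aux (A p) (A u)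
  have h2' : (1/2) * (m ^ 2 * ‖p‖ ^ 2) - ‖A u‖ ^ 2 ≤ ‖A w‖ ^ 2 := by
    have : ‖A p‖ ^ 2 = m ^ 2 * ‖p‖ ^ 2 := by rw [h3]; ring
    linarith [h2, this.ge, this.le]
  rw [h1, h5]
  have P1 : t * ((1/2) * (m ^ 2 * ‖p‖ ^ 2) - ‖A u‖ ^ 2) ≤ t * ‖A w‖ ^ 2 :=
    mul_le_mul_of_nonneg_left h2' ht0.le
  have P2 : t * ‖A w‖ ^ 2 ≤ ‖A w‖ ^ 2 :=
    mul_le_of_le_one_left (sq_nonneg ‖A w‖) ht1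
  have P3 : t * ‖A u‖ ^ 2 ≤ t * (‖A‖ ^ 2 * ‖u‖ ^ 2) :=
    mul_le_mul_of_nonneg_left h4' ht0.le
  have P4 : t * (2 * ‖A‖ ^ 2) * ‖u‖ ^ 2 ≤ δ * ‖u‖ ^ 2 :=
    mul_le_mul_of_nonneg_right ht2 (sq_nonneg ‖u‖)
  have P5 : c * ‖p‖ ^ 2 ≤ (t * m ^ 2 / 2) * ‖p‖ ^ 2 :=
    mul_le_mul_of_nonneg_right hc1 (sq_nonneg ‖p‖)
  have P6 : c * ‖u‖ ^ 2 ≤ (δ / 2) * ‖u‖ ^ 2 :=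
    mul_le_mul_of_nonneg_right hc2 (sq_nonneg ‖u‖)
  clear hp hu hw h1 h5 humem hpmem hpu hup h3 h2 h2' h4 h4' hA hK hc hm ht hδdef hinj hAv hAvn
  clear_value p u K A c t m δ
  nlinarith [P1, P2, P3, P4, P5, P6]
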